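/- For any η > 0, 0 < ν ≤ η/2, and any real s', the Laplace-type transform of ρ^{±1} satisfies ∫_{s'}^{∞} e^{−ηz} ρ(z)^{±1} dz ≤ (8/η) exp(−η s' ± ν|s'|), where ρ(z) = 1 + exp(ν|z|). -/

import Mathlib

open MeasureTheory Set Real Filter

lemma integral_exp_neg_mul_Ioi (b a : ℝ) (hb : 0 < b) :
    (∫ z in Ioi a, Real.exp (-b * z)) = Real.exp (-b * a) / b := by
  have hderiv : ∀ x ∈ Ici a, HasDerivAt (fun z => -Real.exp (-b * z) / b)
      (Real.exp (-b * x)) x := by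
    intro x _
    have h1 : HasDerivAt (fun z : ℝ => -b * z) (-b) x := by
      simpa using (hasDerivAt_id x).const_mul (-b)
    have h2 := (h1.exp).neg.div_const b
    exact h2.congr_deriv (by rw [div_eq_iff hb.ne']; ring)
  have hint : IntegrableOn (fun z => Real.exp (-b * z)) (Ioi a) :=
    exp_neg_integrableOn_Ioi a hb
  have htend : Tendsto (fun z => -Real.exp (-b * z) / b) atTop (nhds 0) := by
    have h3 : Tendsto (fun z : ℝ => -b * z) atTop atBot :=
      tendsto_id.const_mul_atTop_of_neg (by linarith)
    have := (Real.tendsto_exp_atBot.comp h3).neg.div_const b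
    simpa using this
  have := MeasureTheory.integral_Ioi_of_hasDerivAt_of_tendsto' hderiv hint htend
  rw [this]; ring

lemma key (b C a : ℝ) (hb : 0 < b) (f : ℝ → ℝ) (hfc : Continuous f)
    (hf0 : ∀ z ∈ Ioi a, 0 ≤ f z)
    (hfle : ∀ z ∈ Ioi a, f z ≤ C * Real.exp (-b * z)) :
    (∫ z in Ioi a, f z) ≤ C * (Real.exp (-b * a) / b) := by
  have hint : IntegrableOn (fun z => C * Real.exp (-b * z)) (Ioi a) :=
    (exp_neg_integrableOn_Ioi a hb).const_mul C
  have hfint : IntegrableOn f (Ioi a) := by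
    refine MeasureTheory.Integrable.mono' hint hfc.aestronglyMeasurable.restrict ?_
    refine (ae_restrict_iff' measurableSet_Ioi).mpr (ae_of_all _ fun z hz => ?_)
    rw [Real.norm_eq_abs, abs_of_nonneg (hf0 z hz)]
    exact hfle z hz
  calc (∫ z in Ioi a, f z) ≤ ∫ z in Ioi a, C * Real.exp (-b * z) :=
        MeasureTheory.setIntegral_mono_on hfint hint measurableSet_Ioi hfle
    _ = C * (Real.exp (-b * a) / b) := by
        rw [MeasureTheory.integral_const_mul, integral_exp_neg_mul_Ioi b a hb]

/-- Laplace-type transform bounds for the weight `ρ(z) = 1 + exp(ν|z|)` and its reciprocal: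
for `η > 0` and `0 < ν ≤ η/2`,
`∫_{s'}^∞ e^{−ηz} ρ(z)^{±1} dz ≤ (8/η) exp(−η s' ± ν|s'|)`. -/
theorem laplace_rho_bounds (η ν s' : ℝ) (hη : 0 < η) (hν0 : 0 < ν) (hν : ν ≤ η / 2) :
    (∫ z in Ioi s', Real.exp (-η * z) * (1 + Real.exp (ν * |z|))) ≤
        8 / η * Real.exp (-η * s' + ν * |s'|) ∧
    (∫ z in Ioi s', Real.exp (-η * z) * (1 + Real.exp (ν * |z|))⁻¹) ≤
        8 / η * Real.exp (-η * s' - ν * |s'|) := by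
  have hb : 0 < η - ν := by linarith
  have hρpos : ∀ z : ℝ, 0 < 1 + Real.exp (ν * |z|) := fun z => by positivity
  constructor
  · -- first bound
    have h1 := key (η - ν) (2 * Real.exp (ν * |s'| - ν * s')) s' hb
      (fun z => Real.exp (-η * z) * (1 + Real.exp (ν * |z|)))
      (by continuity)
      (fun z _ => by positivity)
      (fun z hz => ?_)
    · refine h1.trans ?_
      have hE : Real.exp (ν * |s'| - ν * s') * Real.exp (-(η - ν) * s')
          = Real.exp (-η * s' + ν * |s'|) := by
        rw [← Real.exp_add]; congr 1; ring
      have hdiv : 2 / (η - ν) ≤ 8 / η := by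
        rw [div_le_div_iff₀ hb hη]; nlinarith
      have hpos := (Real.exp_pos (-η * s' + ν * |s'|)).le
      calc 2 * Real.exp (ν * |s'| - ν * s') * (Real.exp (-(η - ν) * s') / (η - ν))
            = 2 / (η - ν) * Real.exp (-η * s' + ν * |s'|) := by rw [← hE]; ring
        _ ≤ 8 / η * Real.exp (-η * s' + ν * |s'|) := by gcongr
    · -- pointwise bound
      have hz' : s' < z := hz
      have habs : |z| ≤ |s'| + (z - s') := by
        have := abs_sub_abs_le_abs_sub z s'
        rw [abs_of_nonneg (by linarith : (0:ℝ) ≤ z - s')] at this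
        linarith
      have h2 : 1 + Real.exp (ν * |z|) ≤ 2 * Real.exp (ν * |z|) := by
        have : (1:ℝ) ≤ Real.exp (ν * |z|) := Real.one_le_exp (by positivity)
        linarith
      calc Real.exp (-η * z) * (1 + Real.exp (ν * |z|))
            ≤ Real.exp (-η * z) * (2 * Real.exp (ν * |z|)) :=
              mul_le_mul_of_nonneg_left h2 (Real.exp_pos _).le
        _ = 2 * Real.exp (-η * z + ν * |z|) := by rw [Real.exp_add]; ring
        _ ≤ 2 * Real.exp (ν * |s'| - ν * s' + -(η - ν) * z) :=
              mul_le_mul_of_nonneg_left (Real.exp_le_exp.mpr (by nlinarith)) (by norm_num)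
        _ = 2 * Real.exp (ν * |s'| - ν * s') * Real.exp (-(η - ν) * z) := by
              rw [Real.exp_add]; ring
  · -- second bound
    have h1 := key (η - ν) (Real.exp (-(ν * |s'|) - ν * s') ) s' hb
      (fun z => Real.exp (-η * z) * (1 + Real.exp (ν * |z|))⁻¹)
      (by
        apply Real.continuous_exp.comp (by continuity) |>.mul
        exact ((continuous_const.add (Real.continuous_exp.comp
          (continuous_const.mul continuous_abs))).inv₀ (fun z => (hρpos z).ne')))
      (fun z _ => by positivity)
      (fun z hz => ?_)
    · refine h1.trans ?_
      have hE : Real.exp (-(ν * |s'|) - ν * s') * Real.exp (-(η - ν) * s')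
          = Real.exp (-η * s' - ν * |s'|) := by
        rw [← Real.exp_add]; congr 1; ring
      have hdiv : 1 / (η - ν) ≤ 8 / η := by
        rw [div_le_div_iff₀ hb hη]; nlinarith
      have hpos := (Real.exp_pos (-η * s' - ν * |s'|)).le
      calc Real.exp (-(ν * |s'|) - ν * s') * (Real.exp (-(η - ν) * s') / (η - ν))
            = 1 / (η - ν) * Real.exp (-η * s' - ν * |s'|) := by rw [← hE]; ring
        _ ≤ 8 / η * Real.exp (-η * s' - ν * |s'|) := by gcongr
    · have hz' : s' < z := hz
      have habs : |s'| ≤ |z| + (z - s') := by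
        have := abs_sub_abs_le_abs_sub s' z
        rw [abs_sub_comm, abs_of_nonneg (by linarith : (0:ℝ) ≤ z - s')] at this
        linarith
      have h2 : (1 + Real.exp (ν * |z|))⁻¹ ≤ Real.exp (-(ν * |z|)) := by
        rw [Real.exp_neg]
        apply inv_anti₀ (Real.exp_pos _)
        linarith [Real.exp_pos (ν * |z|)]
      calc Real.exp (-η * z) * (1 + Real.exp (ν * |z|))⁻¹
            ≤ Real.exp (-η * z) * Real.exp (-(ν * |z|)) :=
              mul_le_mul_of_nonneg_left h2 (Real.exp_pos _).le
        _ = Real.exp (-η * z + -(ν * |z|)) := by rw [Real.exp_add]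
        _ ≤ Real.exp (-(ν * |s'|) - ν * s' + -(η - ν) * z) :=
              Real.exp_le_exp.mpr (by nlinarith)
        _ = Real.exp (-(ν * |s'|) - ν * s') * Real.exp (-(η - ν) * z) := by
              rw [Real.exp_add]
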